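/- Let q be a power of 2 and m ≥ 2 an integer with gcd(q-1, m(m-1)) = 1, and let λ be a partition of m such that S_{λ,F_q} is nonempty. Then D_{λ,F_q} = F_q^×, and for any two elements δ_1, δ_2 ∈ F_q^×, the number of polynomials in S_{λ,F_q} with discriminant δ_1 equals the number with discriminant δ_2. -/

import Mathlib

open Polynomial
open scoped Classical

/-- The discriminant of a polynomial `f` of degree `m ≥ 2` over a field `F`, computed in an
algebraic closure via the standard formula
`disc(f) = (-1)^(m(m-1)/2) · a_m^(m-2) · ∏_i f'(α_i)`, where `a_m` is the leading coefficient
and the `α_i` are the roots of `f` (with multiplicity) in the algebraic closure; this equals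
`a_m^(2m-2) · ∏_{i<j} (α_i - α_j)^2`.  For `f` of degree at most 1 it is defined to be `1`. -/
noncomputable def polyDisc {F : Type*} [Field F] (f : F[X]) : AlgebraicClosure F :=
  if f.natDegree ≤ 1 then 1
  else
    (-1) ^ (f.natDegree * (f.natDegree - 1) / 2) *
      algebraMap F (AlgebraicClosure F) f.leadingCoeff ^ (f.natDegree - 2) *
      (Multiset.map (fun a => ((derivative f).map (algebraMap F (AlgebraicClosure F))).eval a)
        (f.map (algebraMap F (AlgebraicClosure F))).roots).prod

/-- The Möbius function on polynomials over a field: `μ f = (-1)^k` if `f` is squarefree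
with `k` (distinct) monic irreducible factors, and `μ f = 0` otherwise. -/
noncomputable def polyMu {F : Type*} [Field F] (f : F[X]) : ℤ :=
  if Squarefree f then (-1) ^ {π : F[X] | π.Monic ∧ Irreducible π ∧ π ∣ f}.ncard else 0

/-- `f` has factorization type `λ` (a partition of `m`): `f` is a product of distinct monic
irreducible polynomials whose degrees form the multiset of parts of `λ`.  The set
`S_{λ,F}` of monic squarefree polynomials of factorization type `λ` is
`{f | hasFactorizationType f λ}`. -/
def hasFactorizationType {F : Type*} [Field F] (f : F[X]) {m : ℕ} (lam : m.Partition) : Prop :=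
  ∃ s : Finset F[X], (∀ π ∈ s, π.Monic ∧ Irreducible π) ∧ (∏ π ∈ s, π) = f ∧
    Multiset.map natDegree s.val = lam.parts

section ScaleAux

variable {F : Type*} [Field F]

lemma scaleRoots_scaleRoots_inv {c : F} (hc : c ≠ 0) (p : F[X]) :
    (p.scaleRoots c).scaleRoots c⁻¹ = p := by
  rw [← Polynomial.scaleRoots_mul, mul_inv_cancel₀ hc, Polynomial.scaleRoots_one]

lemma scaleRoots_injective {c : F} (hc : c ≠ 0) :
    Function.Injective (fun p : F[X] => p.scaleRoots c) :=
  Function.LeftInverse.injective (g := fun p : F[X] => p.scaleRoots c⁻¹)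
    (fun p => scaleRoots_scaleRoots_inv hc p)

lemma isUnit_scaleRoots_iff (c : F) (p : F[X]) :
    IsUnit (p.scaleRoots c) ↔ IsUnit p := by
  rw [Polynomial.isUnit_iff_degree_eq_zero, Polynomial.isUnit_iff_degree_eq_zero,
    Polynomial.degree_scaleRoots]

lemma irreducible_scaleRoots {c : F} (hc : c ≠ 0) {p : F[X]} (hp : Irreducible p) :
    Irreducible (p.scaleRoots c) := by
  constructor
  · rw [isUnit_scaleRoots_iff]; exact hp.not_isUnit
  · intro a b hab
    have h : p = a.scaleRoots c⁻¹ * b.scaleRoots c⁻¹ := by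
      rw [← Polynomial.mul_scaleRoots_of_noZeroDivisors, ← hab,
        scaleRoots_scaleRoots_inv hc]
    rcases hp.isUnit_or_isUnit h with h' | h'
    · exact Or.inl ((isUnit_scaleRoots_iff _ _).mp h')
    · exact Or.inr ((isUnit_scaleRoots_iff _ _).mp h')

/-- `scaleRoots · c` as a monoid hom. -/
noncomputable def scaleHom (c : F) : F[X] →* F[X] where
  toFun p := p.scaleRoots c
  map_one' := Polynomial.one_scaleRoots c
  map_mul' p q := Polynomial.mul_scaleRoots_of_noZeroDivisors p q c

lemma hasFactorizationType_scaleRoots {m : ℕ} {lam : m.Partition} {f : F[X]} {c : F}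
    (hc : c ≠ 0) (hf : hasFactorizationType f lam) :
    hasFactorizationType (f.scaleRoots c) lam := by
  obtain ⟨s, hmon, hprod, hdeg⟩ := hf
  refine ⟨s.map ⟨fun p => p.scaleRoots c, scaleRoots_injective hc⟩, ?_, ?_, ?_⟩
  · intro π hπ
    simp only [Finset.mem_map, Function.Embedding.coeFn_mk] at hπ
    obtain ⟨ρ, hρ, rfl⟩ := hπ
    exact ⟨(Polynomial.monic_scaleRoots_iff c).mpr (hmon ρ hρ).1,
      irreducible_scaleRoots hc (hmon ρ hρ).2⟩
  · rw [Finset.prod_map, ← hprod]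
    exact (map_prod (scaleHom c) (fun ρ => ρ) s).symm
  · rw [Finset.map_val, Multiset.map_map]
    simpa [Function.comp_def, Polynomial.natDegree_scaleRoots] using hdeg

lemma hasFactorizationType_props [PerfectField F] {m : ℕ} {lam : m.Partition} {f : F[X]}
    (hf : hasFactorizationType f lam) : f.Monic ∧ f.Separable ∧ f.natDegree = m := by
  obtain ⟨s, hmon, hprod, hdeg⟩ := hf
  have hM : f.Monic := by
    rw [← hprod]; exact Polynomial.monic_prod_of_monic s _ (fun π h => (hmon π h).1)
  refine ⟨hM, ?_, ?_⟩
  · rw [← hprod]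
    refine Polynomial.separable_prod' ?_
      (fun π h => PerfectField.separable_of_irreducible (hmon π h).2)
    intro x hx y hy hxy
    rw [(hmon x hx).2.coprime_iff_not_dvd]
    intro hdvd
    exact hxy (Polynomial.eq_of_monic_of_associated (hmon x hx).1 (hmon y hy).1
      ((hmon x hx).2.associated_of_dvd (hmon y hy).2 hdvd))
  · rw [← hprod, Polynomial.natDegree_prod _ _ (fun π h => (hmon π h).1.ne_zero)]
    have : (Multiset.map natDegree s.val).sum = lam.parts.sum := by rw [hdeg]
    rw [lam.parts_sum] at this
    rw [← this]
    rfl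

lemma polyDisc_eq {f : F[X]} (hf : 2 ≤ f.natDegree) :
    polyDisc f = (-1) ^ (f.natDegree * (f.natDegree - 1) / 2) *
      algebraMap F (AlgebraicClosure F) f.leadingCoeff ^ (f.natDegree - 2) *
      (Multiset.map (fun a => ((derivative f).map (algebraMap F (AlgebraicClosure F))).eval a)
        (f.map (algebraMap F (AlgebraicClosure F))).roots).prod := by
  rw [polyDisc, if_neg (by omega)]

lemma polyDisc_ne_zero {f : F[X]} (hsep : f.Separable) (hdeg : 2 ≤ f.natDegree) :
    polyDisc f ≠ 0 := by
  rw [polyDisc_eq hdeg]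
  refine mul_ne_zero (mul_ne_zero (pow_ne_zero _ (neg_ne_zero.mpr one_ne_zero))
    (pow_ne_zero _ ?_)) ?_
  · intro h
    rw [_root_.map_eq_zero, Polynomial.leadingCoeff_eq_zero] at h
    rw [h] at hdeg
    simp at hdeg
  · apply Multiset.prod_ne_zero
    rw [Multiset.mem_map]
    rintro ⟨a, ha, ha0⟩
    have hsep' : (f.map (algebraMap F (AlgebraicClosure F))).Separable := hsep.map
    obtain ⟨u, v, huv⟩ := hsep'
    have h1 : (f.map (algebraMap F (AlgebraicClosure F))).eval a = 0 :=
      Polynomial.isRoot_of_mem_roots ha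
    have h2 : (derivative (f.map (algebraMap F (AlgebraicClosure F)))).eval a = 0 := by
      rw [Polynomial.derivative_map]; exact ha0
    have := congrArg (Polynomial.eval a) huv
    rw [Polynomial.eval_add, Polynomial.eval_mul, Polynomial.eval_mul, h1, h2,
      Polynomial.eval_one] at this
    simp at this

end ScaleAux

section RingAux

variable {R : Type*} [CommRing R]

lemma scaleRoots_X_sub_C [Nontrivial R] (c a : R) :
    (X - C a).scaleRoots c = X - C (a * c) := by
  ext n
  rcases n with _ | _ | n <;>
    simp [Polynomial.coeff_scaleRoots, Polynomial.natDegree_X_sub_C, Polynomial.coeff_sub,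
      Polynomial.coeff_X, Polynomial.coeff_C, Polynomial.natDegree_X, mul_comm]

lemma derivative_scaleRoots (p : R[X]) (c : R) :
    derivative (p.scaleRoots c) =
      c ^ ((p.natDegree - 1) - (derivative p).natDegree) • (derivative p).scaleRoots c := by
  have hd' : (derivative p).natDegree ≤ p.natDegree - 1 := Polynomial.natDegree_derivative_le p
  ext n
  simp only [Polynomial.coeff_derivative, Polynomial.coeff_smul, Polynomial.coeff_scaleRoots,
    Polynomial.natDegree_scaleRoots, smul_eq_mul]
  by_cases h : n ≤ (derivative p).natDegree
  · by_cases h1 : n + 1 ≤ p.natDegree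
    · have he : p.natDegree - (n + 1) =
          (p.natDegree - 1 - (derivative p).natDegree) + ((derivative p).natDegree - n) := by
        omega
      rw [he, pow_add]
      ring
    · have hc0 : p.coeff (n + 1) = 0 := Polynomial.coeff_eq_zero_of_natDegree_lt (by omega)
      rw [hc0]
      ring
  · have h0 : (derivative p).coeff n = 0 :=
      Polynomial.coeff_eq_zero_of_natDegree_lt (lt_of_not_ge h)
    have h0' : p.coeff (n + 1) * (n + 1 : R) = 0 := by
      rw [← Polynomial.coeff_derivative]; exact h0
    rw [show p.coeff (n + 1) * c ^ (p.natDegree - (n + 1)) * (n + 1 : R)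
        = p.coeff (n + 1) * (n + 1 : R) * c ^ (p.natDegree - (n + 1)) from by ring, h0']
    ring

end RingAux

section FieldAux

variable {K : Type*} [Field K]

lemma roots_scaleRoots_of_splits {p : K[X]} (hmonic : p.Monic)
    (hsplits : p.Splits) (c : K) :
    (p.scaleRoots c).roots = p.roots.map (fun a => a * c) := by
  conv_lhs => rw [hsplits.eq_prod_roots_of_monic hmonic]
  have key : ((p.roots.map fun a => X - C a).prod).scaleRoots c
      = ((p.roots.map fun a => a * c).map fun a => X - C a).prod := by
    have h2 := map_multiset_prod (scaleHom c) (p.roots.map fun a => X - C a)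
    simp only [scaleHom, MonoidHom.coe_mk, OneHom.coe_mk] at h2
    rw [h2, Multiset.map_map, Multiset.map_map]
    congr 1
    apply Multiset.map_congr rfl
    intro a _
    exact scaleRoots_X_sub_C c a
  rw [key, Polynomial.roots_multiset_prod_X_sub_C]

lemma eval_scaleRoots (p : K[X]) (c a : K) :
    (p.scaleRoots c).eval (a * c) = c ^ p.natDegree * p.eval a := by
  have h := Polynomial.scaleRoots_eval₂_mul (RingHom.id K) a c (p := p)
  simp only [RingHom.id_apply] at h
  rw [mul_comm a c]
  exact h

end FieldAux

section DiscAux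

lemma polyDisc_scaleRoots {F : Type*} [Field F] {f : F[X]} (hmon : f.Monic)
    (hdeg : 2 ≤ f.natDegree) {c : F} (hc : c ≠ 0) :
    polyDisc (f.scaleRoots c) =
      algebraMap F (AlgebraicClosure F) c ^ (f.natDegree * (f.natDegree - 1)) * polyDisc f := by
  classical
  set K := AlgebraicClosure F with hK
  set algK := algebraMap F K with halgK
  set m := f.natDegree with hm
  set cK := algK c with hcKdef
  have hcK0 : cK ≠ 0 := by
    simp only [hcKdef, ne_eq, _root_.map_eq_zero]
    exact hc
  have hg_deg : (f.scaleRoots c).natDegree = m := Polynomial.natDegree_scaleRoots f c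
  have hg_mon : (f.scaleRoots c).Monic := (Polynomial.monic_scaleRoots_iff c).mpr hmon
  have hmap : (f.scaleRoots c).map algK = (f.map algK).scaleRoots cK :=
    Polynomial.map_scaleRoots f c algK (by rw [hmon.leadingCoeff, map_one]; exact one_ne_zero)
  have hPmon : (f.map algK).Monic := hmon.map algK
  have hPdeg : (f.map algK).natDegree = m := Polynomial.natDegree_map algK
  have hsplit : ((f.map algK)).Splits :=
    IsAlgClosed.splits _
  have hcard : Multiset.card (f.map algK).roots = m :=
    (Polynomial.splits_iff_card_roots.mp hsplit).trans hPdeg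
  have hd' : (derivative (f.map algK)).natDegree ≤ m - 1 := by
    have := Polynomial.natDegree_derivative_le (f.map algK)
    rwa [hPdeg] at this
  have hDg : (derivative (f.scaleRoots c)).map algK =
      cK ^ ((m - 1) - (derivative (f.map algK)).natDegree) •
        (derivative (f.map algK)).scaleRoots cK := by
    rw [← Polynomial.derivative_map, hmap, derivative_scaleRoots, hPdeg]
  have hroots : ((f.scaleRoots c).map algK).roots = (f.map algK).roots.map (fun a => a * cK) := by
    rw [hmap, roots_scaleRoots_of_splits hPmon hsplit]
  have hev : ∀ a : K, ((derivative (f.scaleRoots c)).map algK).eval (a * cK) =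
      cK ^ (m - 1) * ((derivative f).map algK).eval a := by
    intro a
    rw [hDg, Polynomial.smul_eq_C_mul, Polynomial.eval_mul, Polynomial.eval_C,
      eval_scaleRoots, Polynomial.derivative_map, ← mul_assoc, ← pow_add]
    have hd2 : ((derivative f).map algK).natDegree ≤ m - 1 := by
      rw [← Polynomial.derivative_map]
      exact hd'
    have heq : (m - 1) - ((derivative f).map algK).natDegree + ((derivative f).map algK).natDegree
        = m - 1 := by omega
    rw [heq]
  rw [polyDisc_eq (by rw [hg_deg]; exact hdeg), polyDisc_eq hdeg, hg_deg,
    hg_mon.leadingCoeff, hmon.leadingCoeff]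
  simp only [map_one, one_pow]
  rw [hroots, Multiset.map_map]
  have hprodeq : ((f.map algK).roots.map
        (fun a => ((derivative (f.scaleRoots c)).map algK).eval (a * cK))).prod
      = cK ^ ((m - 1) * m) *
        ((f.map algK).roots.map (fun a => ((derivative f).map algK).eval a)).prod := by
    rw [Multiset.map_congr rfl (fun a _ => hev a)]
    rw [Multiset.prod_map_mul (f := fun _ => cK ^ (m - 1))
      (g := fun a => ((derivative f).map algK).eval a)]
    rw [Multiset.map_const', Multiset.prod_replicate, hcard, ← pow_mul]
  have hcomp : ((fun a => ((derivative (f.scaleRoots c)).map algK).eval a) ∘ (fun a => a * cK))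
      = fun a => ((derivative (f.scaleRoots c)).map algK).eval (a * cK) := rfl
  rw [hcomp, hprodeq, show (m - 1) * m = m * (m - 1) from Nat.mul_comm _ _]
  ring

end DiscAux

section FiniteAux

lemma charP_two_of_card {F : Type*} [Field F] [Fintype F] {n : ℕ}
    (h : Fintype.card F = 2 ^ n) : CharP F 2 := by
  obtain ⟨k, hk, hcard⟩ := FiniteField.card F (ringChar F)
  have h2 : ringChar F = 2 := by
    have hdvd : ringChar F ∣ 2 ^ n := by
      rw [← h, hcard]
      exact dvd_pow_self _ k.pos.ne'
    exact (Nat.prime_dvd_prime_iff_eq hk Nat.prime_two).mp (hk.dvd_of_dvd_pow hdvd)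
  rw [← h2]
  exact ringChar.charP F

lemma polyDisc_pow_card {F : Type*} [Field F] [Fintype F] {n : ℕ}
    (hcard : Fintype.card F = 2 ^ n) {f : F[X]} (hdeg : 2 ≤ f.natDegree) :
    polyDisc f ^ Fintype.card F = polyDisc f := by
  classical
  haveI hF2 : CharP F 2 := charP_two_of_card hcard
  haveI hK2 : CharP (AlgebraicClosure F) 2 :=
    charP_of_injective_algebraMap (algebraMap F (AlgebraicClosure F)).injective 2
  haveI : ExpChar (AlgebraicClosure F) 2 := ExpChar.prime Nat.prime_two
  set K := AlgebraicClosure F with hKdef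
  set algK := algebraMap F K with halgK
  set φ := iterateFrobenius K 2 n with hφ
  have hφ_apply : ∀ x : K, φ x = x ^ Fintype.card F := by
    intro x
    rw [hφ, iterateFrobenius_def, hcard]
  have hφalg : ∀ a : F, φ (algK a) = algK a := by
    intro a
    rw [hφ_apply, ← map_pow, FiniteField.pow_card]
  have hcomp : φ.comp (algK : F →+* K) = algK := RingHom.ext hφalg
  have hsplit : (f.map algK).Splits :=
    IsAlgClosed.splits _
  have hDfix : ((derivative f).map algK).map φ = (derivative f).map algK := by
    rw [Polynomial.map_map, hcomp]
  have hffix : (f.map algK).map φ = f.map algK := by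
    rw [Polynomial.map_map, hcomp]
  have hrootsfix : (f.map algK).roots.map φ = (f.map algK).roots := by
    rw [← hsplit.roots_map (φ : K →+* K), hffix]
  rw [← hφ_apply, polyDisc_eq hdeg, map_mul, map_mul, map_pow, map_pow, map_neg, map_one,
    hφalg]
  congr 1
  rw [map_multiset_prod, Multiset.map_map]
  have hpt : ∀ a : K, (φ ∘ fun a => ((derivative f).map algK).eval a) a
      = ((derivative f).map algK).eval (φ a) := by
    intro a
    have h1 := Polynomial.eval₂_at_apply (p := (derivative f).map algK) (φ : K →+* K) a
    have h2 : ((derivative f).map algK).eval₂ (φ : K →+* K) (φ a)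
        = (((derivative f).map algK).map φ).eval (φ a) := by
      rw [Polynomial.eval_map]
    simp only [Function.comp_apply]
    rw [← h1, h2, hDfix]
  rw [Multiset.map_congr rfl (fun a _ => hpt a)]
  conv_rhs => rw [← hrootsfix]
  rw [Multiset.map_map]
  rfl

lemma exists_algebraMap_eq_of_pow_card {F : Type*} [Field F] [Fintype F]
    (x : AlgebraicClosure F) (hx : x ^ Fintype.card F = x) :
    ∃ a : F, algebraMap F (AlgebraicClosure F) a = x := by
  classical
  set algK := algebraMap F (AlgebraicClosure F) with halgK
  have h1 : (1 : ℕ) < Fintype.card F := Fintype.one_lt_card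
  set P : F[X] := X ^ Fintype.card F - X with hP
  have hP0 : P ≠ 0 := FiniteField.X_pow_card_sub_X_ne_zero F h1
  have hProots : P.roots = Finset.univ.val := FiniteField.roots_X_pow_card_sub_X F
  have hPdeg : P.natDegree = Fintype.card F := FiniteField.X_pow_card_sub_X_natDegree_eq F h1
  have hsplit : P.Splits := by
    rw [Polynomial.splits_iff_card_roots, hProots, hPdeg]
    simp
  have hxr : x ∈ (P.map algK).roots := by
    rw [Polynomial.mem_roots']
    constructor
    · simpa [Polynomial.map_eq_zero] using hP0
    · simp [hP, Polynomial.IsRoot, hx]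
  rw [hsplit.roots_map _, hProots, Multiset.mem_map] at hxr
  obtain ⟨a, _, ha⟩ := hxr
  exact ⟨a, ha⟩

lemma exists_pow_eq_of_ne_zero {F : Type*} [Field F] [Fintype F] {q N : ℕ}
    (hq : Fintype.card F = q) (hgcd : Nat.gcd (q - 1) N = 1) {d : F} (hd : d ≠ 0) :
    ∃ c : F, c ≠ 0 ∧ c ^ N = d := by
  have hcop : (Nat.card Fˣ).Coprime N := by
    rw [Nat.card_units, Nat.card_eq_fintype_card, hq]
    exact hgcd
  obtain ⟨u, hu⟩ := (powCoprime hcop).surjective (Units.mk0 d hd)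
  refine ⟨(u : F), u.ne_zero, ?_⟩
  have h2 := congrArg Units.val hu
  simpa [powCoprime_apply] using h2

end FiniteAux

/-- If `q` is a power of `2`, `gcd(q-1, m(m-1)) = 1`, and `λ` is a partition of `m ≥ 2` such
that `S_{λ,F_q}` is nonempty, then `D_{λ,F_q} = F_q^×` and any two elements of `F_q^×` are
discriminants of equally many polynomials in `S_{λ,F_q}`. -/
theorem stmt14 {F : Type*} [Field F] [Fintype F] (q m : ℕ) (hq : Fintype.card F = q)
    (h2 : ∃ n : ℕ, q = 2 ^ n) (hm : 2 ≤ m) (hgcd : Nat.gcd (q - 1) (m * (m - 1)) = 1)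
    (lam : m.Partition) (hne : ∃ f : F[X], hasFactorizationType f lam) :
    {d : F | ∃ f : F[X], hasFactorizationType f lam ∧
        polyDisc f = algebraMap F (AlgebraicClosure F) d} = {d : F | d ≠ 0} ∧
    ∀ δ₁ δ₂ : F, δ₁ ≠ 0 → δ₂ ≠ 0 →
      {f : F[X] | hasFactorizationType f lam ∧
          polyDisc f = algebraMap F (AlgebraicClosure F) δ₁}.ncard =
      {f : F[X] | hasFactorizationType f lam ∧
          polyDisc f = algebraMap F (AlgebraicClosure F) δ₂}.ncard := by
  classical
  obtain ⟨n, hn⟩ := h2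
  have hcard2 : Fintype.card F = 2 ^ n := by rw [hq, hn]
  set algK := algebraMap F (AlgebraicClosure F) with halgK
  set N := m * (m - 1) with hN
  have hprops : ∀ f : F[X], hasFactorizationType f lam →
      f.Monic ∧ f.Separable ∧ f.natDegree = m :=
    fun f hf => hasFactorizationType_props hf
  have hscale : ∀ (f : F[X]) (c : F), c ≠ 0 → hasFactorizationType f lam →
      hasFactorizationType (f.scaleRoots c) lam ∧
        polyDisc (f.scaleRoots c) = algK c ^ N * polyDisc f := by
    intro f c hc hf
    obtain ⟨hmon, hsep, hdeg⟩ := hprops f hf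
    refine ⟨hasFactorizationType_scaleRoots hc hf, ?_⟩
    have := polyDisc_scaleRoots hmon (by omega) hc
    rwa [hdeg] at this
  constructor
  · ext d
    simp only [Set.mem_setOf_eq]
    constructor
    · rintro ⟨f, hf, hdisc⟩
      obtain ⟨hmon, hsep, hdeg⟩ := hprops f hf
      intro hd0
      exact polyDisc_ne_zero hsep (by omega) (by rw [hdisc, hd0, map_zero])
    · intro hd
      obtain ⟨f₀, hf₀⟩ := hne
      obtain ⟨hmon, hsep, hdeg⟩ := hprops f₀ hf₀
      have hq_inv : polyDisc f₀ ^ Fintype.card F = polyDisc f₀ :=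
        polyDisc_pow_card hcard2 (by omega)
      obtain ⟨d₀, hd₀⟩ := exists_algebraMap_eq_of_pow_card _ hq_inv
      have hd₀0 : d₀ ≠ 0 := by
        intro h0
        exact polyDisc_ne_zero hsep (by omega) (by rw [← hd₀, h0, map_zero])
      obtain ⟨c, hc0, hcN⟩ := exists_pow_eq_of_ne_zero hq hgcd (d := d * d₀⁻¹)
        (by simp [hd, hd₀0])
      refine ⟨f₀.scaleRoots c, (hscale f₀ c hc0 hf₀).1, ?_⟩
      rw [(hscale f₀ c hc0 hf₀).2, ← hd₀, ← map_pow, ← map_mul, hcN]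
      congr 1
      field_simp
  · intro δ₁ δ₂ h1 h2'
    obtain ⟨c, hc0, hcN⟩ := exists_pow_eq_of_ne_zero hq hgcd (d := δ₂ * δ₁⁻¹)
      (by simp [h1, h2'])
    have himg : {f : F[X] | hasFactorizationType f lam ∧ polyDisc f = algK δ₂}
        = (fun f : F[X] => f.scaleRoots c) ''
          {f : F[X] | hasFactorizationType f lam ∧ polyDisc f = algK δ₁} := by
      ext g
      simp only [Set.mem_image, Set.mem_setOf_eq]
      constructor
      · rintro ⟨hg, hgd⟩
        refine ⟨g.scaleRoots c⁻¹, ⟨(hscale g c⁻¹ (inv_ne_zero hc0) hg).1, ?_⟩, ?_⟩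
        · rw [(hscale g c⁻¹ (inv_ne_zero hc0) hg).2, hgd, ← map_pow, ← map_mul]
          congr 1
          rw [inv_pow, hcN]
          field_simp
        · rw [← Polynomial.scaleRoots_mul, inv_mul_cancel₀ hc0, Polynomial.scaleRoots_one]
      · rintro ⟨f, ⟨hf, hfd⟩, rfl⟩
        refine ⟨(hscale f c hc0 hf).1, ?_⟩
        rw [(hscale f c hc0 hf).2, hfd, ← map_pow, ← map_mul, hcN]
        congr 1
        field_simp
    rw [himg, Set.ncard_image_of_injective _ (scaleRoots_injective hc0)]
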